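/- Let R = ∂B be a nondegenerate convex reflector with focal function p and radial function ρ. Then for every y ∈ Sⁿ, p(y) = sup_{x ∈ Sⁿ} ρ(x)(1 − ⟨x,y⟩), and this supremum is attained. -/
import Mathlib


open scoped InnerProductSpace ENNReal
open Metric Set

noncomputable section

/-- Euclidean space `ℝ^{n+1}`. -/
abbrev E (n : ℕ) : Type := EuclideanSpace ℝ (Fin (n + 1))

/-- The unit sphere `Sⁿ` centered at the origin in `ℝ^{n+1}`. -/
def sph (n : ℕ) : Set (E n) := Metric.sphere (0 : E n) 1

/-- `B` is the convex body of a nondegenerate convex reflector: `B` is the intersection of the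
solid confocal paraboloids `{X : ‖X‖ - ⟪X,y⟫ ≤ p̃ y}` for some `p̃ : Sⁿ → (0,∞]`
(encoded via `ENNReal`), `B` is compact and the origin is an interior point of `B`.
The reflector itself is `R = frontier B`. -/
def IsReflectorBody (n : ℕ) (B : Set (E n)) : Prop :=
  IsCompact B ∧ (0 : E n) ∈ interior B ∧
    ∃ pt : E n → ℝ≥0∞, (∀ y ∈ sph n, 0 < pt y) ∧
      B = {X : E n | ∀ y ∈ sph n, ENNReal.ofReal (‖X‖ - ⟪X, y⟫_ℝ) ≤ pt y}

/-- The focal function `p(y) = sup_{X ∈ B} (‖X‖ - ⟪X, y⟫)` of the reflector `∂B`. -/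
def focal (n : ℕ) (B : Set (E n)) (y : E n) : ℝ :=
  sSup ((fun X => ‖X‖ - ⟪X, y⟫_ℝ) '' B)

/-- The radial function `ρ(x) = sup {λ ≥ 0 : λ x ∈ B}`. -/
def radial (n : ℕ) (B : Set (E n)) (x : E n) : ℝ :=
  sSup {l : ℝ | 0 ≤ l ∧ l • x ∈ B}

/-- The support function `h(U) = sup_{X ∈ B} ⟪X, U⟫`. -/
def suppFn (n : ℕ) (B : Set (E n)) (U : E n) : ℝ :=
  sSup ((fun X => ⟪X, U⟫_ℝ) '' B)

/-- The extended focal function `P(Y) = sup_{X ∈ B} (‖X‖‖Y‖ - ⟪X, Y⟫)` on all of `ℝ^{n+1}`. -/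
def extFocal (n : ℕ) (B : Set (E n)) (Y : E n) : ℝ :=
  sSup ((fun X => ‖X‖ * ‖Y‖ - ⟪X, Y⟫_ℝ) '' B)

/-- The directrix `D(R) = {X - ‖X‖y : X ∈ R, y ∈ Sⁿ, ‖X‖ - ⟪X,y⟫ = p(y)}` of the
reflector `R = frontier B`. -/
def directrix (n : ℕ) (B : Set (E n)) : Set (E n) :=
  {Z : E n | ∃ X ∈ frontier B, ∃ y ∈ sph n,
    ‖X‖ - ⟪X, y⟫_ℝ = focal n B y ∧ Z = X - ‖X‖ • y}

/-- For every `y ∈ Sⁿ`, `p(y) = sup_{x ∈ Sⁿ} ρ(x)(1 - ⟪x,y⟫)`,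
and this supremum is attained. -/
theorem statement3 (n : ℕ) (hn : 1 ≤ n) (B : Set (E n)) (hB : IsReflectorBody n B)
    (y : E n) (hy : y ∈ sph n) :
    (∀ x ∈ sph n, radial n B x * (1 - ⟪x, y⟫_ℝ) ≤ focal n B y) ∧
    (∃ x ∈ sph n, radial n B x * (1 - ⟪x, y⟫_ℝ) = focal n B y) := by
  obtain ⟨hBc, h0, -⟩ := hB
  have h0B : (0 : E n) ∈ B := interior_subset h0
  have hne : B.Nonempty := ⟨0, h0B⟩
  have hyn : ‖y‖ = 1 := by simpa [sph] using hy
  have hcont : Continuous (fun X : E n => ‖X‖ - ⟪X, y⟫_ℝ) :=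
    continuous_norm.sub (continuous_id.inner continuous_const)
  obtain ⟨X₀, hX₀B, hmax⟩ := hBc.exists_isMaxOn hne hcont.continuousOn
  have hmax' : ∀ X ∈ B, ‖X‖ - ⟪X, y⟫_ℝ ≤ ‖X₀‖ - ⟪X₀, y⟫_ℝ := fun X hX => hmax hX
  have hfocal : focal n B y = ‖X₀‖ - ⟪X₀, y⟫_ℝ := by
    refine IsGreatest.csSup_eq ⟨⟨X₀, hX₀B, rfl⟩, ?_⟩
    rintro _ ⟨X, hX, rfl⟩; exact hmax' X hX
  obtain ⟨R, hR⟩ := hBc.isBounded.exists_norm_le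
  -- radial facts for unit vectors
  have hrad : ∀ x : E n, ‖x‖ = 1 →
      0 ≤ radial n B x ∧ radial n B x • x ∈ B ∧
      ∀ l : ℝ, 0 ≤ l → l • x ∈ B → l ≤ radial n B x := by
    intro x hx
    set S : Set ℝ := {l : ℝ | 0 ≤ l ∧ l • x ∈ B} with hS
    have hSne : S.Nonempty := ⟨0, le_refl 0, by simpa using h0B⟩
    have hSbdd : BddAbove S := by
      refine ⟨R, fun l hl => ?_⟩
      have := hR _ hl.2
      rwa [norm_smul, hx, mul_one, Real.norm_eq_abs, abs_of_nonneg hl.1] at this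
    have hSclosed : IsClosed S := by
      have : S = {l : ℝ | 0 ≤ l} ∩ (fun l : ℝ => l • x) ⁻¹' B := rfl
      rw [this]
      exact isClosed_Ici.inter (hBc.isClosed.preimage (continuous_id.smul continuous_const))
    have hmem : sSup S ∈ S := hSclosed.csSup_mem hSne hSbdd
    exact ⟨hmem.1, hmem.2, fun l hl hlB => le_csSup hSbdd ⟨hl, hlB⟩⟩
  have part1 : ∀ x ∈ sph n, radial n B x * (1 - ⟪x, y⟫_ℝ) ≤ focal n B y := by
    intro x hx
    have hx1 : ‖x‖ = 1 := by simpa [sph] using hx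
    obtain ⟨hρ0, hρB, -⟩ := hrad x hx1
    have := hmax' _ hρB
    rw [hfocal]
    calc radial n B x * (1 - ⟪x, y⟫_ℝ)
        = ‖radial n B x • x‖ - ⟪radial n B x • x, y⟫_ℝ := by
          rw [norm_smul, hx1, mul_one, real_inner_smul_left, Real.norm_eq_abs,
            abs_of_nonneg hρ0]; ring
      _ ≤ ‖X₀‖ - ⟪X₀, y⟫_ℝ := this
  refine ⟨part1, ?_⟩
  -- the focal value is positive, so X₀ ≠ 0
  have hfpos : 0 < focal n B y := by
    obtain ⟨ε, hε, hball⟩ := Metric.mem_nhds_iff.mp (mem_interior_iff_mem_nhds.mp h0)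
    have hXB : (ε / 2) • (-y) ∈ B := by
      apply hball
      rw [Metric.mem_ball, dist_zero_right, norm_smul, norm_neg, hyn, mul_one,
        Real.norm_eq_abs, abs_of_nonneg (by positivity)]
      linarith
    have hle := hmax' _ hXB
    have hval : ‖(ε / 2) • (-y)‖ - ⟪(ε / 2) • (-y), y⟫_ℝ = ε := by
      rw [norm_smul, norm_neg, hyn, mul_one, real_inner_smul_left, inner_neg_left,
        real_inner_self_eq_norm_sq, hyn, Real.norm_eq_abs, abs_of_nonneg (by positivity)]
      ring
    rw [hfocal]
    calc (0:ℝ) < ε := hε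
      _ = _ := hval.symm
      _ ≤ _ := hle
  have hX₀ne : X₀ ≠ 0 := by
    rintro rfl
    rw [hfocal] at hfpos
    simp at hfpos
  have hn0 : ‖X₀‖ ≠ 0 := norm_ne_zero_iff.mpr hX₀ne
  set x : E n := ‖X₀‖⁻¹ • X₀ with hxdef
  have hx1 : ‖x‖ = 1 := by
    rw [hxdef, norm_smul, Real.norm_eq_abs, abs_of_nonneg (by positivity),
      inv_mul_cancel₀ hn0]
  have hxs : x ∈ sph n := by simpa [sph] using hx1
  refine ⟨x, hxs, le_antisymm (part1 x hxs) ?_⟩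
  obtain ⟨hρ0, hρB, hρub⟩ := hrad x hx1
  have hXx : ‖X₀‖ • x = X₀ := by
    rw [hxdef, smul_smul, mul_inv_cancel₀ hn0, one_smul]
  have hρge : ‖X₀‖ ≤ radial n B x := hρub ‖X₀‖ (norm_nonneg _) (by rw [hXx]; exact hX₀B)
  have hip : (1 : ℝ) - ⟪x, y⟫_ℝ ≥ 0 := by
    have := real_inner_le_norm x y
    rw [hx1, hyn] at this
    linarith
  have hxy : ⟪x, y⟫_ℝ = ‖X₀‖⁻¹ * ⟪X₀, y⟫_ℝ := by
    rw [hxdef, real_inner_smul_left]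
  rw [hfocal]
  calc ‖X₀‖ - ⟪X₀, y⟫_ℝ = ‖X₀‖ * (1 - ⟪x, y⟫_ℝ) := by
        rw [hxy]; field_simp
    _ ≤ radial n B x * (1 - ⟪x, y⟫_ℝ) := mul_le_mul_of_nonneg_right hρge hip
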